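/- For every positive integer m, there exist a set G of exactly m goods and an additive valuation u on subsets of G such that for two individual agents both having valuation u, every allocation (B₁, B₂) of G that is EFX for both agents satisfies |B₁| = 1 or |B₂| = 1. -/

import Mathlib

open Finset

variable {γ : Type*} [DecidableEq γ]

/-- An allocation is EFX (envy-free up to any positively valued good) for an agent with
valuation `u` whose group receives `mine`, the other group receiving `other`. -/
def EFX (u : Finset γ → ℝ) (mine other : Finset γ) : Prop :=
  ∀ g ∈ other, 0 < u {g} → u (other \ {g}) ≤ u mine

/-- A valuation is additive if the value of a set is the sum of values of its singletons. -/
def AdditiveVal (u : Finset γ → ℝ) : Prop :=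
  ∀ S : Finset γ, u S = ∑ g ∈ S, u {g}

lemma aux_key (m : ℕ) (hm : 0 < m) (A B : Finset (Fin m))
    (hd : Disjoint A B)
    (htop : (⟨m - 1, by omega⟩ : Fin m) ∈ A)
    (hE : EFX (fun S : Finset (Fin m) => ∑ g ∈ S, (2:ℝ) ^ (g : ℕ)) B A) : A.card = 1 := by
  set top : Fin m := ⟨m - 1, by omega⟩ with htopdef
  by_contra hc
  have hcard : 2 ≤ A.card := by
    have : 1 ≤ A.card := Finset.card_pos.mpr ⟨top, htop⟩
    omega
  obtain ⟨h, hhA, hhne⟩ : ∃ h ∈ A, h ≠ top := by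
    by_contra hno
    push_neg at hno
    have : A ⊆ {top} := fun x hx => Finset.mem_singleton.mpr (hno x hx)
    have := Finset.card_le_card this
    simp at this
    omega
  have hpos : (0:ℝ) < ∑ g ∈ ({h} : Finset (Fin m)), (2:ℝ) ^ (g : ℕ) := by
    simp [Finset.sum_singleton]
  have hEh := hE h hhA hpos
  -- lower bound on A \ {h}
  have hmem : top ∈ A \ {h} := by
    simp [Finset.mem_sdiff, htop, Ne.symm hhne]
  have hlow : (2:ℝ) ^ (m - 1) ≤ ∑ g ∈ A \ {h}, (2:ℝ) ^ (g : ℕ) := by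
    have := Finset.single_le_sum (f := fun g : Fin m => (2:ℝ) ^ (g : ℕ))
      (fun i _ => by positivity) hmem
    simpa using this
  -- upper bound on B
  have hBsub : B ⊆ Finset.univ.erase top := by
    intro x hx
    refine Finset.mem_erase.mpr ⟨?_, Finset.mem_univ x⟩
    intro hxe
    exact (Finset.disjoint_left.mp hd htop) (hxe ▸ hx)
  have hBle : ∑ g ∈ B, (2:ℝ) ^ (g : ℕ) ≤ ∑ g ∈ Finset.univ.erase top, (2:ℝ) ^ (g : ℕ) :=
    Finset.sum_le_sum_of_subset_of_nonneg hBsub (fun i _ _ => by positivity)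
  have htot : ∑ g : Fin m, (2:ℝ) ^ (g : ℕ) = 2 ^ m - 1 := by
    rw [Fin.sum_univ_eq_sum_range (fun i => (2:ℝ) ^ i)]
    have := geom_sum_eq (by norm_num : (2:ℝ) ≠ 1) m
    rw [this]; ring
  have herase : ∑ g ∈ Finset.univ.erase top, (2:ℝ) ^ (g : ℕ)
      = (2 ^ m - 1) - 2 ^ (m - 1) := by
    have := Finset.sum_erase_add Finset.univ (fun g : Fin m => (2:ℝ) ^ (g : ℕ))
      (Finset.mem_univ top)
    have htopval : (2:ℝ) ^ ((top : Fin m) : ℕ) = 2 ^ (m - 1) := by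
      simp [htopdef]
    rw [htopval] at this
    rw [htot] at this
    linarith
  have hpow : (2:ℝ) ^ m = 2 * 2 ^ (m - 1) := by
    conv_lhs => rw [show m = (m - 1) + 1 by omega]
    rw [pow_succ]; ring
  have hup : ∑ g ∈ B, (2:ℝ) ^ (g : ℕ) < 2 ^ (m - 1) := by
    rw [herase] at hBle
    nlinarith
  have := hEh
  simp only at this
  linarith

/-- For every positive integer m there are m goods and an additive valuation, shared by two
individual agents, such that every EFX allocation gives one of the agents exactly one good. -/
theorem identical_additive_EFX_singleton (m : ℕ) (hm : 0 < m) :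
    ∃ u : Finset (Fin m) → ℝ, AdditiveVal u ∧ (∀ S, 0 ≤ u S) ∧
      ∀ B₁ B₂ : Finset (Fin m), Disjoint B₁ B₂ → B₁ ∪ B₂ = Finset.univ →
        (EFX u B₁ B₂ ∧ EFX u B₂ B₁) → B₁.card = 1 ∨ B₂.card = 1 := by
  refine ⟨fun S => ∑ g ∈ S, (2:ℝ) ^ (g : ℕ), ?_, ?_, ?_⟩
  · intro S
    simp [Finset.sum_singleton]
  · intro S
    exact Finset.sum_nonneg (fun i _ => by positivity)
  · intro B₁ B₂ hd hu ⟨hE1, hE2⟩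
    set top : Fin m := ⟨m - 1, by omega⟩ with htopdef
    have : top ∈ B₁ ∪ B₂ := hu ▸ Finset.mem_univ top
    rcases Finset.mem_union.mp this with h1 | h2
    · exact Or.inl (aux_key m hm B₁ B₂ hd h1 hE2)
    · exact Or.inr (aux_key m hm B₂ B₁ hd.symm h2 hE1)
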